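/- Let n ≥ 2 and let A be an n × n real matrix such that ‖A − P‖_{S_1} = n − 1 for every n × n permutation matrix P. Then A = J_n. -/

import Mathlib

open Matrix BigOperators

/-- The matrix `J_n` with all entries equal to `1/n`. -/
noncomputable def matJ (n : ℕ) : Matrix (Fin n) (Fin n) ℝ :=
  Matrix.of fun _ _ => (n : ℝ)⁻¹

/-- The singular values of a real square matrix: the square roots of the
eigenvalues of `Aᴴ * A` (`Aᴴ = Aᵀ` over `ℝ`). -/
noncomputable def singularValues {n : ℕ} (A : Matrix (Fin n) (Fin n) ℝ) : Fin n → ℝ :=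
  fun i => Real.sqrt ((Matrix.isHermitian_conjTranspose_mul_self A).eigenvalues i)

/-- The Schatten `p`-norm of a real square matrix. -/
noncomputable def schattenNorm {n : ℕ} (p : ℝ) (A : Matrix (Fin n) (Fin n) ℝ) : ℝ :=
  (∑ i, singularValues A i ^ p) ^ (1 / p)

/-- The Frobenius norm of a real square matrix. -/
noncomputable def frobNorm {n : ℕ} (A : Matrix (Fin n) (Fin n) ℝ) : ℝ :=
  Real.sqrt (∑ i, ∑ j, (A i j) ^ 2)

/-- The minimal trace of a square matrix: the minimum over all permutations `σ`
of `∑ i, A i (σ i)`. -/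
noncomputable def trMin {n : ℕ} (A : Matrix (Fin n) (Fin n) ℝ) : ℝ :=
  ⨅ σ : Equiv.Perm (Fin n), ∑ i, A i (σ i)

/-- A matrix is a permutation matrix if it is the matrix of some permutation. -/
def IsPermMatrix {n : ℕ} (P : Matrix (Fin n) (Fin n) ℝ) : Prop :=
  ∃ σ : Equiv.Perm (Fin n), P = σ.permMatrix ℝ

set_option maxHeartbeats 1000000 in
theorem vN {n : ℕ} (B Q : Matrix (Fin n) (Fin n) ℝ)
    (hQ : ∀ i j, (∑ k, Q k i * Q k j) = if i = j then (1:ℝ) else 0) :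
    (∑ i, ∑ j, B i j * Q i j) ≤ ∑ i, singularValues B i := by
  set hH := Matrix.isHermitian_conjTranspose_mul_self B with hHdef
  set v : Fin n → Fin n → ℝ := fun k => (hH.eigenvectorBasis k : EuclideanSpace ℝ (Fin n)) with hv
  -- orthonormality as sums
  have horm : ∀ i j, (∑ a, v i a * v j a) = if i = j then (1:ℝ) else 0 := by
    intro i j
    have := orthonormal_iff_ite.mp hH.eigenvectorBasis.orthonormal i j
    rw [PiLp.inner_apply] at this
    simp [RCLike.inner_apply, conj_trivial] at this
    rw [← this]
    exact Finset.sum_congr rfl fun a _ => mul_comm _ _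
  -- completeness: V * Vᵀ = 1 entrywise
  have hcomp : ∀ a b, (∑ k, v k a * v k b) = if a = b then (1:ℝ) else 0 := by
    have h1 : (Matrix.of fun a k => v k a)ᵀ * (Matrix.of fun a k => v k a) = 1 := by
      ext i j
      simp only [Matrix.mul_apply, Matrix.transpose_apply, Matrix.of_apply, Matrix.one_apply]
      exact horm i j
    have h2 := mul_eq_one_comm.mp h1
    intro a b
    have := congrFun (congrFun h2 a) b
    simpa [Matrix.mul_apply, Matrix.one_apply] using this
  -- eigenvalue identity: ∑_j (B v_k)_j ^2 = eigenvalues k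
  have heig : ∀ k, (∑ j, (B *ᵥ v k) j ^ 2) = hH.eigenvalues k := by
    intro k
    have hmv : (Bᵀ * B) *ᵥ v k = hH.eigenvalues k • v k := hH.mulVec_eigenvectorBasis k
    have : (∑ j, (B *ᵥ v k) j ^ 2) = (B *ᵥ v k) ⬝ᵥ (B *ᵥ v k) := by
      simp [dotProduct, pow_two]
    rw [this]
    have h3 : v k ⬝ᵥ ((Bᵀ * B) *ᵥ v k) = (B *ᵥ v k) ⬝ᵥ (B *ᵥ v k) := by
      rw [Matrix.dotProduct_mulVec, ← Matrix.vecMul_vecMul, Matrix.vecMul_transpose,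
        ← Matrix.dotProduct_mulVec]
    have hvv : v k ⬝ᵥ v k = 1 := by simpa [dotProduct] using horm k k
    rw [← h3, hmv, dotProduct_smul, hvv, smul_eq_mul, mul_one]
  -- Q orthogonal as matrix
  have hQm : Qᵀ * Q = 1 := by
    ext i j
    simpa [Matrix.mul_apply, Matrix.one_apply] using hQ i j
  have hQv : ∀ k, (Q *ᵥ v k) ⬝ᵥ (Q *ᵥ v k) = 1 := by
    intro k
    have h3 : v k ⬝ᵥ ((Qᵀ * Q) *ᵥ v k) = (Q *ᵥ v k) ⬝ᵥ (Q *ᵥ v k) := by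
      rw [Matrix.dotProduct_mulVec, ← Matrix.vecMul_vecMul, Matrix.vecMul_transpose,
        ← Matrix.dotProduct_mulVec]
    have hvv : v k ⬝ᵥ v k = 1 := by simpa [dotProduct] using horm k k
    rw [← h3, hQm, Matrix.one_mulVec, hvv]
  -- trace identity
  set V : Matrix (Fin n) (Fin n) ℝ := Matrix.of fun a k => v k a with hVdef
  have hV1 : Vᵀ * V = 1 := by
    ext i j
    simpa [Matrix.mul_apply, Matrix.one_apply, hVdef] using horm i j
  have hV2 : V * Vᵀ = 1 := mul_eq_one_comm.mp hV1
  have e1 : ∀ k, (B *ᵥ v k) ⬝ᵥ (Q *ᵥ v k) = ((Vᵀ * Bᵀ) * (Q * V)) k k := by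
    intro k
    simp only [Matrix.mul_apply, Matrix.transpose_apply, dotProduct, Matrix.mulVec,
      Matrix.of_apply, hVdef]
    refine Finset.sum_congr rfl fun j _ => ?_
    congr 1
    refine Finset.sum_congr rfl fun a _ => ?_
    ring
  have e2 : (∑ k, (B *ᵥ v k) ⬝ᵥ (Q *ᵥ v k)) = ∑ i, ∑ j, B i j * Q i j := by
    calc (∑ k, (B *ᵥ v k) ⬝ᵥ (Q *ᵥ v k)) = ∑ k, ((Vᵀ * Bᵀ) * (Q * V)) k k := by
          exact Finset.sum_congr rfl fun k _ => e1 k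
      _ = Matrix.trace ((Vᵀ * Bᵀ) * (Q * V)) := rfl
      _ = Matrix.trace ((Q * V) * (Vᵀ * Bᵀ)) := Matrix.trace_mul_comm _ _
      _ = Matrix.trace (Q * Bᵀ) := by
          rw [Matrix.mul_assoc, ← Matrix.mul_assoc V, hV2, Matrix.one_mul]
      _ = ∑ i, ∑ j, B i j * Q i j := by
          simp [Matrix.trace, Matrix.mul_apply, Matrix.diag, mul_comm]
  rw [← e2]
  refine Finset.sum_le_sum fun k _ => ?_
  -- Cauchy-Schwarz
  have hcs : ((B *ᵥ v k) ⬝ᵥ (Q *ᵥ v k)) ^ 2 ≤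
      (∑ j, (B *ᵥ v k) j ^ 2) * (∑ j, (Q *ᵥ v k) j ^ 2) := by
    simpa [dotProduct, pow_two] using
      Finset.sum_mul_sq_le_sq_mul_sq Finset.univ (B *ᵥ v k) (Q *ᵥ v k)
  have hq1 : (∑ j, (Q *ᵥ v k) j ^ 2) = 1 := by
    simpa [dotProduct, pow_two] using hQv k
  rw [heig k, hq1, mul_one] at hcs
  have h0 : (0:ℝ) ≤ hH.eigenvalues k := by
    rw [← heig k]; positivity
  calc (B *ᵥ v k) ⬝ᵥ (Q *ᵥ v k) ≤ |(B *ᵥ v k) ⬝ᵥ (Q *ᵥ v k)| := le_abs_self _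
    _ = Real.sqrt (((B *ᵥ v k) ⬝ᵥ (Q *ᵥ v k)) ^ 2) := (Real.sqrt_sq_eq_abs _).symm
    _ ≤ Real.sqrt (hH.eigenvalues k) := Real.sqrt_le_sqrt hcs
    _ = singularValues B k := rfl

lemma schatten_one {n : ℕ} (B : Matrix (Fin n) (Fin n) ℝ) :
    schattenNorm 1 B = ∑ i, singularValues B i := by
  simp [schattenNorm, Real.rpow_one]

lemma permMatrix_apply' {n : ℕ} (σ : Equiv.Perm (Fin n)) (i j : Fin n) :
    (σ.permMatrix ℝ) i j = if σ i = j then 1 else 0 := by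
  simp [Equiv.Perm.permMatrix, PEquiv.toMatrix_apply, Equiv.toPEquiv_apply, eq_comm]

lemma quad_zero (α β : ℝ) (h : ∀ t : ℝ, β * t ≤ α * t ^ 2) : β = 0 := by
  by_contra hβ
  have hβ2 : 0 < β ^ 2 := by positivity
  set ε : ℝ := 1 / (|α| + 1) with hεdef
  have hε : (0:ℝ) < ε := by positivity
  have h1 := h (β * ε)
  have h1' : β ^ 2 * ε ≤ (α * ε * β ^ 2) * ε := by
    calc β ^ 2 * ε = β * (β * ε) := by ring
      _ ≤ α * (β * ε) ^ 2 := h1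
      _ = (α * ε * β ^ 2) * ε := by ring
  have h2 : β ^ 2 ≤ α * ε * β ^ 2 := le_of_mul_le_mul_right h1' hε
  have h3 : α * ε < 1 := by
    have ha : α * ε ≤ |α| * ε := mul_le_mul_of_nonneg_right (le_abs_self α) hε.le
    have h4 : |α| * ε < 1 := by
      rw [hεdef, mul_one_div]
      exact (div_lt_one (by positivity)).mpr (by linarith [abs_nonneg α])
    linarith
  nlinarith

set_option maxHeartbeats 1000000 in
/-- For `n ≥ 2`, if `‖A − P‖_{S_1} = n − 1` for every permutation
matrix `P`, then `A = J_n`. -/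
theorem equidistant_from_permMatrices_trace_norm {n : ℕ} (hn : 2 ≤ n)
    (A : Matrix (Fin n) (Fin n) ℝ)
    (h : ∀ σ : Equiv.Perm (Fin n), schattenNorm 1 (A - σ.permMatrix ℝ) = (n : ℝ) - 1) :
    A = matJ n := by
  haveI : NeZero n := ⟨by omega⟩
  have hn0 : (0:ℝ) < n := by positivity
  set a : Equiv.Perm (Fin n) → ℝ := fun σ => ∑ i, A i (σ i) with hadef
  set s : ℝ := ∑ i, ∑ j, A i j with hsdef
  -- the key inequality
  have key : ∀ (σ : Equiv.Perm (Fin n)) (Q : Matrix (Fin n) (Fin n) ℝ),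
      (∀ i j, (∑ k, Q k i * Q k j) = if i = j then (1:ℝ) else 0) →
      (∑ i, ∑ j, (A i j - (if σ i = j then (1:ℝ) else 0)) * Q i j) ≤ (n : ℝ) - 1 := by
    intro σ Q hQ
    have := vN (A - σ.permMatrix ℝ) Q hQ
    rw [← schatten_one, h σ] at this
    refine le_trans (le_of_eq ?_) this
    refine Finset.sum_congr rfl fun i _ => Finset.sum_congr rfl fun j _ => ?_
    rw [Matrix.sub_apply, permMatrix_apply']
  -- collapse helpers
  have hcol : ∀ (σ : Equiv.Perm (Fin n)) (f : Fin n → ℝ) (i : Fin n),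
      (∑ j, f j * (if σ i = j then (1:ℝ) else 0)) = f (σ i) := by
    intro σ f i
    simp [mul_ite]
  have hcolk : ∀ (σ : Equiv.Perm (Fin n)) (f : Fin n → ℝ) (i : Fin n),
      (∑ k, (if σ k = i then (1:ℝ) else 0) * f (σ k)) = f i := by
    intro σ f i
    have : ∀ k, (if σ k = i then (1:ℝ) else 0) * f (σ k)
        = if k = σ.symm i then f (σ k) else 0 := by
      intro k
      by_cases hk : σ k = i
      · rw [if_pos hk, if_pos (by rw [← hk]; simp), one_mul]
      · rw [if_neg hk, if_neg (by intro hh; apply hk; rw [hh]; simp), zero_mul]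
    rw [Finset.sum_congr rfl fun k _ => this k, Finset.sum_ite_eq' Finset.univ,
      if_pos (Finset.mem_univ _)]
    simp
  -- orthogonality of signed permutation-type matrices
  have horthP : ∀ (σ : Equiv.Perm (Fin n)) (i j : Fin n),
      (∑ k, (if σ k = i then (1:ℝ) else 0) * (if σ k = j then (1:ℝ) else 0))
        = if i = j then (1:ℝ) else 0 := by
    intro σ i j
    have := hcolk σ (fun x => if x = j then (1:ℝ) else 0) i
    rw [Finset.sum_congr rfl fun k _ => ?_, this]
    by_cases hk : σ k = i <;> simp [hk, eq_comm]
  -- Step I : 1 ≤ a σ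
  have haσ : ∀ σ, 1 ≤ a σ := by
    intro σ
    have hQ : ∀ i j, (∑ k, (-(if σ k = i then (1:ℝ) else 0)) * (-(if σ k = j then (1:ℝ) else 0)))
        = if i = j then (1:ℝ) else 0 := by
      intro i j
      rw [Finset.sum_congr rfl fun k _ => neg_mul_neg _ _]
      exact horthP σ i j
    have hk := key σ (Matrix.of fun i j => -(if σ i = j then (1:ℝ) else 0)) (by intro i j; exact hQ i j)
    have hLHS : (∑ i, ∑ j, (A i j - (if σ i = j then (1:ℝ) else 0)) *
        ((Matrix.of fun i j => -(if σ i = j then (1:ℝ) else 0)) i j)) = (n:ℝ) - a σ := by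
      have per : ∀ i, (∑ j, (A i j - (if σ i = j then (1:ℝ) else 0)) *
          (-(if σ i = j then (1:ℝ) else 0))) = 1 - A i (σ i) := by
        intro i
        have e1 : ∀ j, (A i j - (if σ i = j then (1:ℝ) else 0)) *
            (-(if σ i = j then (1:ℝ) else 0))
            = (1 - A i j) * (if σ i = j then (1:ℝ) else 0) := by
          intro j
          by_cases hj : σ i = j <;> simp [hj] <;> ring
        rw [Finset.sum_congr rfl fun j _ => e1 j, hcol σ (fun j => 1 - A i j) i]
      calc (∑ i, ∑ j, (A i j - (if σ i = j then (1:ℝ) else 0)) *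
            ((Matrix.of fun i j => -(if σ i = j then (1:ℝ) else 0)) i j))
          = ∑ i, (1 - A i (σ i)) := Finset.sum_congr rfl (fun i _ => per i)
        _ = (n:ℝ) - a σ := by
            rw [Finset.sum_sub_distrib, hadef]
            simp
    rw [hLHS] at hk
    linarith
  have hone : ∀ (σ : Equiv.Perm (Fin n)) (i : Fin n),
      (∑ k, (if σ k = i then (1:ℝ) else 0)) = 1 := by
    intro σ i
    simpa using hcolk σ (fun _ => (1:ℝ)) i
  -- Step II : 2 s / n ≤ a σ + 1
  have hII : ∀ σ, 2 * s / n ≤ a σ + 1 := by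
    intro σ
    have hQ : ∀ i j, (∑ k, ((Matrix.of fun i j => 2/(n:ℝ) - (if σ i = j then (1:ℝ) else 0)) k i)
        * ((Matrix.of fun i j => 2/(n:ℝ) - (if σ i = j then (1:ℝ) else 0)) k j))
        = if i = j then (1:ℝ) else 0 := by
      intro i j
      simp only [Matrix.of_apply]
      have e1 : ∀ k : Fin n, (2/(n:ℝ) - (if σ k = i then (1:ℝ) else 0)) *
          (2/(n:ℝ) - (if σ k = j then (1:ℝ) else 0))
          = 4/(n:ℝ)^2 - (2/(n:ℝ)) * (if σ k = i then (1:ℝ) else 0)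
            - (2/(n:ℝ)) * (if σ k = j then (1:ℝ) else 0)
            + (if σ k = i then (1:ℝ) else 0) * (if σ k = j then (1:ℝ) else 0) := by
        intro k; ring
      rw [Finset.sum_congr rfl fun k _ => e1 k, Finset.sum_add_distrib,
        Finset.sum_sub_distrib, Finset.sum_sub_distrib, ← Finset.mul_sum, ← Finset.mul_sum,
        hone σ i, hone σ j, horthP σ i j, Finset.sum_const, Finset.card_univ, Fintype.card_fin,
        nsmul_eq_mul]
      have hfrac : (n:ℝ) * (4/(n:ℝ)^2) = 4/(n:ℝ) := by field_simp
      rw [hfrac]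
      by_cases hij : i = j <;> simp [hij] <;> field_simp <;> norm_num
    have hk := key σ (Matrix.of fun i j => 2/(n:ℝ) - (if σ i = j then (1:ℝ) else 0)) hQ
    have per : ∀ i, (∑ j, (A i j - (if σ i = j then (1:ℝ) else 0)) *
        (2/(n:ℝ) - (if σ i = j then (1:ℝ) else 0)))
        = (2/(n:ℝ)) * (∑ j, A i j) - A i (σ i) - 2/(n:ℝ) + 1 := by
      intro i
      have e1 : ∀ j, (A i j - (if σ i = j then (1:ℝ) else 0)) *
          (2/(n:ℝ) - (if σ i = j then (1:ℝ) else 0))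
          = (2/(n:ℝ)) * A i j - A i j * (if σ i = j then (1:ℝ) else 0)
            - (2/(n:ℝ)) * (if σ i = j then (1:ℝ) else 0) + (if σ i = j then (1:ℝ) else 0) := by
        intro j
        by_cases hj : σ i = j <;> simp [hj] <;> ring
      have hsum1 : (∑ j, (if σ i = j then (1:ℝ) else 0)) = 1 := by simp
      rw [Finset.sum_congr rfl fun j _ => e1 j, Finset.sum_add_distrib,
        Finset.sum_sub_distrib, Finset.sum_sub_distrib, ← Finset.mul_sum, ← Finset.mul_sum,
        hcol σ (A i) i, hsum1, mul_one]
    have hLHS : (∑ i, ∑ j, (A i j - (if σ i = j then (1:ℝ) else 0)) *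
        ((Matrix.of fun i j => 2/(n:ℝ) - (if σ i = j then (1:ℝ) else 0)) i j))
        = (2/(n:ℝ)) * s - a σ - 2 + (n:ℝ) := by
      calc (∑ i, ∑ j, (A i j - (if σ i = j then (1:ℝ) else 0)) *
            ((Matrix.of fun i j => 2/(n:ℝ) - (if σ i = j then (1:ℝ) else 0)) i j))
          = ∑ i, ((2/(n:ℝ)) * (∑ j, A i j) - A i (σ i) - 2/(n:ℝ) + 1) :=
            Finset.sum_congr rfl (fun i _ => per i)
        _ = (2/(n:ℝ)) * s - a σ - 2 + (n:ℝ) := by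
            rw [Finset.sum_add_distrib, Finset.sum_sub_distrib, Finset.sum_sub_distrib,
              ← Finset.mul_sum]
            have hc1 : (∑ _x : Fin n, (2/(n:ℝ))) = 2 := by
              rw [Finset.sum_const, Finset.card_univ, Fintype.card_fin, nsmul_eq_mul]
              field_simp
            have hc2 : (∑ _x : Fin n, (1:ℝ)) = (n:ℝ) := by simp
            rw [hc1, hc2, show (∑ x : Fin n, A x (σ x)) = a σ from rfl,
              show (∑ x : Fin n, ∑ j, A x j) = s from rfl]
    rw [hLHS] at hk
    have : (2/(n:ℝ)) * s = 2 * s / n := by ring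
    linarith [hk, this.symm.le, this.le]
  -- cyclic family sums
  have hfam : ∀ τ : Equiv.Perm (Fin n), (∑ k : Fin n, a ((Equiv.addRight k).trans τ)) = s := by
    intro τ
    rw [hadef, hsdef]
    simp only [Equiv.trans_apply, Equiv.coe_addRight]
    rw [Finset.sum_comm]
    refine Finset.sum_congr rfl fun i _ => ?_
    exact Equiv.sum_comp ((Equiv.addLeft i).trans τ) (fun j => A i j)
  -- s = n
  have hsn : s = (n:ℝ) := by
    have h1 : (n:ℝ) ≤ s := by
      have := hfam 1
      have hge : ∀ k : Fin n, 1 ≤ a ((Equiv.addRight k).trans 1) := fun k => haσ _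
      calc (n:ℝ) = ∑ _k : Fin n, (1:ℝ) := by simp
        _ ≤ ∑ k : Fin n, a ((Equiv.addRight k).trans 1) := Finset.sum_le_sum fun k _ => hge k
        _ = s := this
    have h2 : s ≤ (n:ℝ) := by
      have hsum : (∑ k : Fin n, (2 * s / n)) ≤ ∑ k : Fin n, (a ((Equiv.addRight k).trans 1) + 1) :=
        Finset.sum_le_sum fun k _ => by linarith [hII ((Equiv.addRight k).trans 1)]
      rw [Finset.sum_add_distrib, hfam 1] at hsum
      simp only [Finset.sum_const, Finset.card_univ, Fintype.card_fin, nsmul_eq_mul] at hsum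
      have : (n:ℝ) * (2 * s / n) = 2 * s := by field_simp
      rw [this] at hsum
      linarith
    linarith
  -- a τ = 1 for all τ
  have haτ : ∀ τ, a τ = 1 := by
    intro τ
    have hsum0 : (∑ k : Fin n, (a ((Equiv.addRight k).trans τ) - 1)) = 0 := by
      rw [Finset.sum_sub_distrib, hfam τ, hsn]
      simp
    have hall := (Finset.sum_eq_zero_iff_of_nonneg
      (fun k _ => by linarith [haσ ((Equiv.addRight k).trans τ)])).mp hsum0
    have h0 := hall 0 (Finset.mem_univ 0)
    have : ((Equiv.addRight (0 : Fin n)).trans τ) = τ := by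
      ext x; simp
    rw [this] at h0
    linarith
  -- exchange
  have hexch : ∀ (σ : Equiv.Perm (Fin n)) (i k : Fin n),
      A i (σ i) + A k (σ k) = A i (σ k) + A k (σ i) := by
    intro σ i k
    by_cases hik : i = k
    · rw [hik]
    · set τ : Equiv.Perm (Fin n) := (Equiv.swap i k).trans σ with hτdef
      have h1 : a τ = 1 := haτ τ
      have h2 : a σ = 1 := haτ σ
      have hdiff : a τ - a σ = (A i (σ k) + A k (σ i)) - (A i (σ i) + A k (σ k)) := by
        rw [hadef]
        simp only [hτdef, Equiv.trans_apply]
        rw [← Finset.sum_sub_distrib]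
        have hzero : ∀ x ∈ Finset.univ, x ∉ ({i, k} : Finset (Fin n)) →
            A x (σ (Equiv.swap i k x)) - A x (σ x) = 0 := by
          intro x _ hx
          simp only [Finset.mem_insert, Finset.mem_singleton] at hx
          push_neg at hx
          rw [Equiv.swap_apply_of_ne_of_ne hx.1 hx.2, sub_self]
        rw [← Finset.sum_subset (Finset.subset_univ ({i, k} : Finset (Fin n))) hzero,
          Finset.sum_pair hik, Equiv.swap_apply_left, Equiv.swap_apply_right]
        ring
      rw [h1, h2] at hdiff
      linarith
  -- rank-two structure
  set z : Fin n := ⟨0, by omega⟩ with hzdef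
  set r : Fin n → ℝ := fun i => A i z with hrdef
  set c : Fin n → ℝ := fun j => A z j - A z z with hcdef
  have hpair : ∀ i k j l : Fin n, i ≠ k → j ≠ l → A i j + A k l = A i l + A k j := by
    intro i k j l hik hjl
    set σ₁ : Equiv.Perm (Fin n) := Equiv.swap i j with hσ₁
    set σ : Equiv.Perm (Fin n) := σ₁.trans (Equiv.swap l (σ₁ k)) with hσ
    have hσi : σ i = j := by
      rw [hσ]
      simp only [Equiv.trans_apply]
      rw [show σ₁ i = j from Equiv.swap_apply_left i j]
      refine Equiv.swap_apply_of_ne_of_ne hjl ?_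
      intro hc
      exact hik (σ₁.injective (by rw [← hc, Equiv.swap_apply_left]))
    have hσk : σ k = l := by
      rw [hσ]
      simp only [Equiv.trans_apply]
      exact Equiv.swap_apply_right l (σ₁ k)
    have := hexch σ i k
    rw [hσi, hσk] at this
    linarith
  have hrc : ∀ i j, A i j = r i + c j := by
    intro i j
    rw [hrdef, hcdef]
    by_cases hi : i = z
    · rw [hi]; ring
    · by_cases hj : j = z
      · rw [hj]; ring
      · have := hpair i z j z hi hj
        simp only []
        linarith
  have hRC : (∑ i, r i) + (∑ j, c j) = 1 := by
    have := haτ 1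
    rw [hadef] at this
    simp only [Equiv.Perm.coe_one, id_eq] at this
    rw [← this, ← Finset.sum_add_distrib]
    exact (Finset.sum_congr rfl fun i _ => (hrc i i).symm)
  -- reflection inequality, unit vectors
  have hrefl : ∀ (σ : Equiv.Perm (Fin n)) (u : Fin n → ℝ), (∑ j, u j ^ 2) = 1 →
      (∑ i, ∑ j, A i j * (u (σ i) * u j)) ≤ 1 := by
    intro σ u hu
    have huσ : (∑ k, u (σ k) ^ 2) = 1 := by
      rw [Equiv.sum_comp σ (fun x => u x ^ 2)]; exact hu
    set Q : Matrix (Fin n) (Fin n) ℝ :=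
      Matrix.of (fun i j => 2 * u (σ i) * u j - (if σ i = j then (1:ℝ) else 0)) with hQdef
    have hQorth : ∀ i j, (∑ k, Q k i * Q k j) = if i = j then (1:ℝ) else 0 := by
      intro i j
      simp only [hQdef, Matrix.of_apply]
      have e1 : ∀ k : Fin n, (2 * u (σ k) * u i - (if σ k = i then (1:ℝ) else 0)) *
          (2 * u (σ k) * u j - (if σ k = j then (1:ℝ) else 0))
          = (4 * (u i * u j)) * (u (σ k))^2
            - (2 * u i) * ((if σ k = j then (1:ℝ) else 0) * u (σ k))
            - (2 * u j) * ((if σ k = i then (1:ℝ) else 0) * u (σ k))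
            + (if σ k = i then (1:ℝ) else 0) * (if σ k = j then (1:ℝ) else 0) := by
        intro k; ring
      rw [Finset.sum_congr rfl fun k _ => e1 k, Finset.sum_add_distrib,
        Finset.sum_sub_distrib, Finset.sum_sub_distrib, ← Finset.mul_sum, ← Finset.mul_sum,
        ← Finset.mul_sum, huσ, hcolk σ u j, hcolk σ u i, horthP σ i j]
      by_cases hij : i = j <;> simp [hij] <;> ring
    have hk := key σ Q hQorth
    have per : ∀ i, (∑ j, (A i j - (if σ i = j then (1:ℝ) else 0)) * (Q i j))
        = 2 * (∑ j, A i j * (u (σ i) * u j)) - A i (σ i) - 2 * (u (σ i) * u (σ i)) + 1 := by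
      intro i
      simp only [hQdef, Matrix.of_apply]
      have e1 : ∀ j, (A i j - (if σ i = j then (1:ℝ) else 0)) *
          (2 * u (σ i) * u j - (if σ i = j then (1:ℝ) else 0))
          = 2 * (A i j * (u (σ i) * u j)) - A i j * (if σ i = j then (1:ℝ) else 0)
            - (2 * (u (σ i) * u j)) * (if σ i = j then (1:ℝ) else 0)
            + (if σ i = j then (1:ℝ) else 0) := by
        intro j
        by_cases hj : σ i = j <;> simp [hj] <;> ring
      have hsum1 : (∑ j, (if σ i = j then (1:ℝ) else 0)) = 1 := by simp
      have hcol2 : (∑ j, (2 * (u (σ i) * u j)) * (if σ i = j then (1:ℝ) else 0))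
          = 2 * (u (σ i) * u (σ i)) := hcol σ (fun j => 2 * (u (σ i) * u j)) i
      rw [Finset.sum_congr rfl fun j _ => e1 j, Finset.sum_add_distrib,
        Finset.sum_sub_distrib, Finset.sum_sub_distrib, ← Finset.mul_sum,
        hcol σ (A i) i, hcol2, hsum1]
    have hu2 : (∑ i, u (σ i) * u (σ i)) = 1 := by
      rw [show (∑ i, u (σ i) * u (σ i)) = ∑ i, u (σ i) ^ 2 from
        Finset.sum_congr rfl fun i _ => (sq (u (σ i))).symm]
      exact huσ
    have hLHS : (∑ i, ∑ j, (A i j - (if σ i = j then (1:ℝ) else 0)) * Q i j)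
        = 2 * (∑ i, ∑ j, A i j * (u (σ i) * u j)) - a σ - 2 + (n:ℝ) := by
      calc (∑ i, ∑ j, (A i j - (if σ i = j then (1:ℝ) else 0)) * Q i j)
          = ∑ i, (2 * (∑ j, A i j * (u (σ i) * u j)) - A i (σ i)
              - 2 * (u (σ i) * u (σ i)) + 1) := Finset.sum_congr rfl fun i _ => per i
        _ = 2 * (∑ i, ∑ j, A i j * (u (σ i) * u j)) - a σ - 2 + (n:ℝ) := by
            rw [Finset.sum_add_distrib, Finset.sum_sub_distrib, Finset.sum_sub_distrib,
              ← Finset.mul_sum, ← Finset.mul_sum, hu2,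
              show (∑ x : Fin n, A x (σ x)) = a σ from rfl]
            simp
    rw [hLHS, haτ σ] at hk
    linarith
  -- reflection inequality, all vectors
  have hrefl' : ∀ (σ : Equiv.Perm (Fin n)) (u : Fin n → ℝ),
      (∑ i, ∑ j, A i j * (u (σ i) * u j)) ≤ ∑ j, u j ^ 2 := by
    intro σ u
    set m : ℝ := ∑ j, u j ^ 2 with hmdef
    have hm0 : 0 ≤ m := Finset.sum_nonneg fun j _ => sq_nonneg _
    rcases eq_or_lt_of_le hm0 with hm | hm
    · have hz : ∀ j, u j = 0 := by
        intro j
        have := (Finset.sum_eq_zero_iff_of_nonneg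
          (fun j (_ : j ∈ Finset.univ) => sq_nonneg (u j))).mp hm.symm j (Finset.mem_univ j)
        exact (pow_eq_zero_iff two_ne_zero).mp this
      have : (∑ i, ∑ j, A i j * (u (σ i) * u j)) = 0 := by
        refine Finset.sum_eq_zero fun i _ => Finset.sum_eq_zero fun j _ => ?_
        rw [hz j, mul_zero, mul_zero]
      rw [this, ← hm]
    · set u' : Fin n → ℝ := fun j => u j / Real.sqrt m with hu'def
      have hsq : Real.sqrt m * Real.sqrt m = m := Real.mul_self_sqrt hm0
      have h1 : (∑ j, u' j ^ 2) = 1 := by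
        have : ∀ j, u' j ^ 2 = u j ^ 2 / m := by
          intro j
          rw [hu'def]
          simp only []
          rw [div_pow, sq (Real.sqrt m), hsq]
        rw [Finset.sum_congr rfl fun j _ => this j, ← Finset.sum_div, ← hmdef,
          div_self (ne_of_gt hm)]
      have h2 := hrefl σ u' h1
      have h3 : (∑ i, ∑ j, A i j * (u' (σ i) * u' j))
          = (∑ i, ∑ j, A i j * (u (σ i) * u j)) / m := by
        have e : ∀ i j, A i j * (u' (σ i) * u' j) = (A i j * (u (σ i) * u j)) / m := by
          intro i j
          rw [hu'def]
          simp only []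
          rw [div_mul_div_comm, hsq]
          ring
        calc (∑ i, ∑ j, A i j * (u' (σ i) * u' j))
            = ∑ i, ∑ j, (A i j * (u (σ i) * u j)) / m :=
              Finset.sum_congr rfl fun i _ => Finset.sum_congr rfl fun j _ => e i j
          _ = (∑ i, ∑ j, A i j * (u (σ i) * u j)) / m := by
              rw [Finset.sum_div]
              exact Finset.sum_congr rfl fun i _ => by rw [Finset.sum_div]
      rw [h3] at h2
      exact (div_le_one hm).mp h2
  -- structure of T
  have hT : ∀ (σ : Equiv.Perm (Fin n)) (u : Fin n → ℝ),
      (∑ i, ∑ j, A i j * (u (σ i) * u j))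
        = (∑ j, u j) * (∑ j, (r (σ.symm j) + c j) * u j) := by
    intro σ u
    set U : ℝ := ∑ j, u j with hUdef
    set Cu : ℝ := ∑ j, c j * u j with hCudef
    have inner : ∀ i, (∑ j, A i j * (u (σ i) * u j))
        = u (σ i) * (r i * U) + u (σ i) * Cu := by
      intro i
      rw [hUdef, hCudef]
      simp only [Finset.mul_sum]
      rw [← Finset.sum_add_distrib]
      refine Finset.sum_congr rfl fun j _ => ?_
      rw [hrc i j]
      ring
    have hre : (∑ i, u (σ i) * r i) = ∑ j, u j * r (σ.symm j) := by
      rw [← Equiv.sum_comp σ (fun x => u x * r (σ.symm x))]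
      simp only [Equiv.symm_apply_apply]
    have hui : (∑ i, u (σ i)) = U := Equiv.sum_comp σ u
    calc (∑ i, ∑ j, A i j * (u (σ i) * u j))
        = ∑ i, (u (σ i) * (r i * U) + u (σ i) * Cu) :=
          Finset.sum_congr rfl fun i _ => inner i
      _ = ∑ i, ((u (σ i) * r i) * U + u (σ i) * Cu) :=
          Finset.sum_congr rfl fun i _ => by ring
      _ = (∑ i, u (σ i) * r i) * U + (∑ i, u (σ i)) * Cu := by
          rw [Finset.sum_add_distrib, ← Finset.sum_mul, ← Finset.sum_mul]
      _ = (∑ j, u j * r (σ.symm j)) * U + U * Cu := by rw [hre, hui]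
      _ = U * (∑ j, (r (σ.symm j) + c j) * u j) := by
          have e2 : (∑ j, (r (σ.symm j) + c j) * u j)
              = (∑ j, u j * r (σ.symm j)) + Cu := by
            rw [hCudef, ← Finset.sum_add_distrib]
            exact Finset.sum_congr rfl fun j _ => by ring
          rw [e2]
          ring
  -- final: entries are 1/n
  have hfinal : ∀ i0 k, A i0 k = (n:ℝ)⁻¹ := by
    intro i0 k
    set σ : Equiv.Perm (Fin n) := Equiv.swap i0 k with hσswap
    have hsymmk : σ.symm k = i0 := by
      rw [hσswap, Equiv.symm_swap, Equiv.swap_apply_right]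
    set v : Fin n → ℝ := fun j => r (σ.symm j) + c j with hvdef
    have hv1 : (∑ j, v j) = 1 := by
      rw [hvdef]
      simp only []
      rw [Finset.sum_add_distrib,
        show (∑ j, r (σ.symm j)) = ∑ i, r i from Equiv.sum_comp σ.symm r]
      exact hRC
    have hineq : ∀ t : ℝ, ((n:ℝ) * v k - 1) * t ≤ (1 - v k) * t ^ 2 := by
      intro t
      set u : Fin n → ℝ := fun j => 1 + (if j = k then t else 0) with hudef
      have hU : (∑ j, u j) = (n:ℝ) + t := by
        rw [hudef]
        simp only []
        rw [Finset.sum_add_distrib]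
        simp [Finset.sum_ite_eq']
      have hSq : (∑ j, u j ^ 2) = (n:ℝ) + 2 * t + t ^ 2 := by
        have e : ∀ j, u j ^ 2
            = 1 + (if j = k then 2*t else 0) + (if j = k then t^2 else 0) := by
          intro j
          rw [hudef]
          by_cases hj : j = k <;> simp [hj] <;> ring
        rw [Finset.sum_congr rfl fun j _ => e j, Finset.sum_add_distrib,
          Finset.sum_add_distrib]
        simp [Finset.sum_ite_eq']
      have hvu : (∑ j, (r (σ.symm j) + c j) * u j) = 1 + v k * t := by
        have e : ∀ j, (r (σ.symm j) + c j) * u j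
            = v j + (if j = k then v j * t else 0) := by
          intro j
          rw [hudef, hvdef]
          by_cases hj : j = k <;> simp [hj] <;> ring
        rw [Finset.sum_congr rfl fun j _ => e j, Finset.sum_add_distrib, hv1]
        simp [Finset.sum_ite_eq']
      have happ := hrefl' σ u
      rw [hT σ u, hU, hvu, hSq] at happ
      nlinarith [happ]
    have hβ := quad_zero (1 - v k) ((n:ℝ) * v k - 1) hineq
    have hvk : v k = (n:ℝ)⁻¹ := by
      have h1 : (n:ℝ) * v k = 1 := by linarith
      field_simp
      linarith
    have h2 : v k = r i0 + c k := by
      rw [hvdef]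
      simp only []
      rw [hsymmk]
    rw [hrc i0 k, ← h2, hvk]
  ext i j
  rw [hfinal i j, matJ]
  simp
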